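/- For an invertible real n x n matrix A, 1/(\|A\|_2 \|A^{-1}\|_2) = inf { \|A - S\|_2 / \|A\|_2 : S singular }. -/

import Mathlib

/-- Operator norm of a matrix, induced by the Euclidean norm. -/
noncomputable def opN {n : ℕ} (A : Matrix (Fin n) (Fin n) ℝ) : ℝ :=
  ‖LinearMap.toContinuousLinearMap (Matrix.toEuclideanLin A)‖

namespace EYAux

open Matrix

variable {n : ℕ}

noncomputable def clm (M : Matrix (Fin n) (Fin n) ℝ) :
    EuclideanSpace ℝ (Fin n) →L[ℝ] EuclideanSpace ℝ (Fin n) :=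
  LinearMap.toContinuousLinearMap (Matrix.toEuclideanLin M)

lemma opN_eq (M : Matrix (Fin n) (Fin n) ℝ) : opN M = ‖clm M‖ := rfl

lemma clm_apply (M : Matrix (Fin n) (Fin n) ℝ) (v : EuclideanSpace ℝ (Fin n)) :
    clm M v = (WithLp.equiv 2 (Fin n → ℝ)).symm (M *ᵥ (WithLp.equiv 2 (Fin n → ℝ)) v) := by
  simp [clm, Matrix.toEuclideanLin_apply]

lemma clm_sub (M N : Matrix (Fin n) (Fin n) ℝ) : clm (M - N) = clm M - clm N := by
  ext v
  simp [clm_apply, Matrix.sub_mulVec]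

/-- norm attainment on the unit sphere. -/
lemma exists_max (hn : 0 < n) (T : EuclideanSpace ℝ (Fin n) →L[ℝ] EuclideanSpace ℝ (Fin n)) :
    ∃ y : EuclideanSpace ℝ (Fin n), ‖y‖ = 1 ∧ ‖T y‖ = ‖T‖ := by
  have hc : IsCompact (Metric.sphere (0 : EuclideanSpace ℝ (Fin n)) 1) :=
    isCompact_sphere _ _
  have hne : (Metric.sphere (0 : EuclideanSpace ℝ (Fin n)) 1).Nonempty := by
    refine ⟨EuclideanSpace.single ⟨0, hn⟩ 1, ?_⟩
    simp [mem_sphere_iff_norm]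
  have hcont : ContinuousOn (fun y => ‖T y‖) (Metric.sphere 0 1) :=
    (T.continuous.norm).continuousOn
  obtain ⟨y, hy, hmax⟩ := hc.exists_isMaxOn hne hcont
  have hy1 : ‖y‖ = 1 := by simpa [mem_sphere_iff_norm] using hy
  refine ⟨y, hy1, le_antisymm ?_ ?_⟩
  · calc ‖T y‖ ≤ ‖T‖ * ‖y‖ := T.le_opNorm y
    _ = ‖T‖ := by rw [hy1, mul_one]
  · refine T.opNorm_le_bound (by positivity) fun v => ?_
    rcases eq_or_ne v 0 with rfl | hv
    · simp
    · have hvn : ‖v‖ ≠ 0 := norm_ne_zero_iff.mpr hv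
      have hmem : (‖v‖⁻¹ • v) ∈ Metric.sphere (0 : EuclideanSpace ℝ (Fin n)) 1 := by
        simp [mem_sphere_iff_norm, norm_smul, abs_of_nonneg (inv_nonneg.mpr (norm_nonneg v)),
          inv_mul_cancel₀ hvn]
      have hle : ‖T (‖v‖⁻¹ • v)‖ ≤ ‖T y‖ := hmax hmem
      rw [T.map_smul, norm_smul, norm_inv, norm_norm] at hle
      have this := hle
      have h2 : ‖T v‖ = ‖v‖ * (‖v‖⁻¹ * ‖T v‖) := by field_simp
      rw [h2]
      calc ‖v‖ * (‖v‖⁻¹ * ‖T v‖) ≤ ‖v‖ * ‖T y‖ := by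
            exact mul_le_mul_of_nonneg_left this (norm_nonneg v)
        _ = ‖T y‖ * ‖v‖ := mul_comm _ _

lemma vecMulVec_mulVec (y x v : Fin n → ℝ) :
    (Matrix.vecMulVec y x) *ᵥ v = (x ⬝ᵥ v) • y := by
  funext i
  simp [Matrix.mulVec, Matrix.vecMulVec_apply, dotProduct, Finset.mul_sum, mul_comm,
    mul_assoc, mul_left_comm]

end EYAux

open Matrix EYAux in
/-- The reciprocal of the 2-norm condition number of an invertible matrix equals
its relative 2-norm distance to the set of singular matrices. -/
theorem inv_cond_eq_dist_to_singular {n : ℕ} (A : Matrix (Fin n) (Fin n) ℝ)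
    (hA : IsUnit A.det) :
    1 / (opN A * opN A⁻¹) =
      sInf {r : ℝ | ∃ S : Matrix (Fin n) (Fin n) ℝ, S.det = 0 ∧ r = opN (A - S) / opN A} := by
  rcases Nat.eq_zero_or_pos n with rfl | hn
  · -- n = 0 : set is empty, both sides are 0
    have hset : {r : ℝ | ∃ S : Matrix (Fin 0) (Fin 0) ℝ, S.det = 0 ∧ r = opN (A - S) / opN A}
        = ∅ := by
      ext r
      simp only [Set.mem_setOf_eq, Set.mem_empty_iff_false, iff_false]
      rintro ⟨S, hS, -⟩
      rw [Matrix.det_fin_zero] at hS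
      exact one_ne_zero hS
    have hA0 : opN A = 0 := by
      rw [opN_eq]
      have : clm A = 0 := by
        ext v i
        exact absurd i.2 (Nat.not_lt_zero _)
      rw [this, norm_zero]
    rw [hset, Real.sInf_empty, hA0, zero_mul, div_zero]
  · -- main case
    have hBA : A⁻¹ * A = 1 := Matrix.nonsing_inv_mul A hA
    have hAB : A * A⁻¹ = 1 := Matrix.mul_nonsing_inv A hA
    set g := clm A with hg
    set gi := clm A⁻¹ with hgi
    have hgig : ∀ v, gi (g v) = v := by
      intro v
      simp [hg, hgi, clm_apply, Matrix.mulVec_mulVec, hBA, Matrix.one_mulVec]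
    have hggi : ∀ v, g (gi v) = v := by
      intro v
      simp [hg, hgi, clm_apply, Matrix.mulVec_mulVec, hAB, Matrix.one_mulVec]
    -- positivity of norms
    have hv0 : (EuclideanSpace.single (⟨0, hn⟩ : Fin n) (1:ℝ)) ≠ 0 := by
      intro h
      have := congrArg (fun w => ‖w‖) h
      simp at this
    have hgpos : 0 < ‖g‖ := by
      rw [norm_pos_iff]
      intro h
      apply hv0
      have := hgig (EuclideanSpace.single ⟨0, hn⟩ 1)
      rw [h] at this
      simpa using this.symm
    have hgipos : 0 < ‖gi‖ := by
      rw [norm_pos_iff]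
      intro h
      apply hv0
      have := hgig (EuclideanSpace.single ⟨0, hn⟩ 1)
      rw [h] at this
      simpa using this.symm
    -- lower bound for distance to any singular matrix
    have lower : ∀ S : Matrix (Fin n) (Fin n) ℝ, S.det = 0 → 1 / ‖gi‖ ≤ opN (A - S) := by
      intro S hS
      obtain ⟨x, hx0, hSx⟩ := (Matrix.exists_mulVec_eq_zero_iff).2 hS
      set x' : EuclideanSpace ℝ (Fin n) := (WithLp.equiv 2 (Fin n → ℝ)).symm x with hx'
      have hx'0 : x' ≠ 0 := by
        intro h
        apply hx0
        have := congrArg (WithLp.equiv 2 (Fin n → ℝ)) h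
        simpa [hx'] using this
      have hx'n : 0 < ‖x'‖ := norm_pos_iff.mpr hx'0
      have key : clm (A - S) x' = g x' := by
        simp [hg, clm_apply, hx', Matrix.sub_mulVec, hSx]
      have h1 : ‖x'‖ ≤ ‖gi‖ * ‖clm (A - S) x'‖ := by
        calc ‖x'‖ = ‖gi (g x')‖ := by rw [hgig]
          _ ≤ ‖gi‖ * ‖g x'‖ := gi.le_opNorm _
          _ = ‖gi‖ * ‖clm (A - S) x'‖ := by rw [key]
      have h2 : ‖clm (A - S) x'‖ ≤ ‖clm (A - S)‖ * ‖x'‖ := (clm (A - S)).le_opNorm _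
      have h3 : ‖x'‖ ≤ ‖gi‖ * (‖clm (A - S)‖ * ‖x'‖) :=
        h1.trans (mul_le_mul_of_nonneg_left h2 (norm_nonneg _))
      rw [opN_eq]
      rw [div_le_iff₀ hgipos]
      have := (mul_le_mul_iff_of_pos_right hx'n).mp (by linarith [h3] : 1 * ‖x'‖ ≤ ‖gi‖ * ‖clm (A - S)‖ * ‖x'‖)
      linarith [this]
    -- construct the minimizing singular matrix
    obtain ⟨y, hy1, hymax⟩ := exists_max hn gi
    set x : EuclideanSpace ℝ (Fin n) := gi y with hxdef
    have hxn : ‖x‖ = ‖gi‖ := hymax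
    have hxpos : 0 < ‖x‖ := by rw [hxn]; exact hgipos
    set x0 : Fin n → ℝ := WithLp.equiv 2 (Fin n → ℝ) x with hx0def
    set y0 : Fin n → ℝ := WithLp.equiv 2 (Fin n → ℝ) y with hy0def
    have hAx : A *ᵥ x0 = y0 := by
      have := hggi y
      rw [hg, clm_apply] at this
      have := congrArg (WithLp.equiv 2 (Fin n → ℝ)) this
      simpa [hx0def, hy0def] using this
    have hdot_self : x0 ⬝ᵥ x0 = ‖x‖ ^ 2 := by
      rw [← real_inner_self_eq_norm_sq]
      simp [PiLp.inner_apply, dotProduct, hx0def, mul_comm]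
      rw [EuclideanSpace.norm_eq, Real.sq_sqrt (by positivity)]
      simp [sq]
    set S : Matrix (Fin n) (Fin n) ℝ := A - (‖x‖ ^ 2)⁻¹ • Matrix.vecMulVec y0 x0 with hSdef
    have hSx : S *ᵥ x0 = 0 := by
      rw [hSdef, Matrix.sub_mulVec, Matrix.smul_mulVec, EYAux.vecMulVec_mulVec, hdot_self, hAx]
      rw [smul_smul, inv_mul_cancel₀ (by positivity)]
      simp
    have hx00 : x0 ≠ 0 := by
      intro h
      apply (norm_pos_iff.mp hxpos)
      have : x = (WithLp.equiv 2 (Fin n → ℝ)).symm x0 := rfl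
      rw [this, h]
      simp
    have hSdet : S.det = 0 := Matrix.exists_mulVec_eq_zero_iff.1 ⟨x0, hx00, hSx⟩
    -- norm of A - S
    have hAS : A - S = (‖x‖ ^ 2)⁻¹ • Matrix.vecMulVec y0 x0 := by
      rw [hSdef, sub_sub_cancel]
    have hASnorm : opN (A - S) ≤ 1 / ‖gi‖ := by
      rw [opN_eq, hAS]
      have hb : ∀ v : EuclideanSpace ℝ (Fin n),
          ‖clm ((‖x‖ ^ 2)⁻¹ • Matrix.vecMulVec y0 x0) v‖ ≤ (1 / ‖gi‖) * ‖v‖ := by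
        intro v
        rw [clm_apply]
        rw [Matrix.smul_mulVec, EYAux.vecMulVec_mulVec]
        have hinner : x0 ⬝ᵥ (WithLp.equiv 2 (Fin n → ℝ)) v = inner ℝ x v := by
          simp [PiLp.inner_apply, dotProduct, hx0def, mul_comm]
        rw [hinner]
        have : ‖(WithLp.equiv 2 (Fin n → ℝ)).symm (((‖x‖ ^ 2)⁻¹ • ((inner ℝ x v : ℝ) • y0)))‖
            = (‖x‖ ^ 2)⁻¹ * |(inner ℝ x v : ℝ)| * ‖y‖ := by
          rw [smul_smul]
          have hy0 : (WithLp.equiv 2 (Fin n → ℝ)).symm (((‖x‖ ^ 2)⁻¹ * (inner ℝ x v : ℝ)) • y0)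
              = ((‖x‖ ^ 2)⁻¹ * (inner ℝ x v : ℝ)) • y := by
            rfl
          rw [hy0, norm_smul]
          rw [Real.norm_eq_abs, abs_mul, abs_of_nonneg (by positivity : (0:ℝ) ≤ (‖x‖ ^ 2)⁻¹)]
        rw [this, hy1, mul_one]
        have hcs : |(inner ℝ x v : ℝ)| ≤ ‖x‖ * ‖v‖ := abs_real_inner_le_norm x v
        calc (‖x‖ ^ 2)⁻¹ * |(inner ℝ x v : ℝ)| ≤ (‖x‖ ^ 2)⁻¹ * (‖x‖ * ‖v‖) :=
              mul_le_mul_of_nonneg_left hcs (by positivity)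
          _ = (1 / ‖x‖) * ‖v‖ := by field_simp
          _ = (1 / ‖gi‖) * ‖v‖ := by rw [hxn]
      exact ContinuousLinearMap.opNorm_le_bound _ (div_nonneg zero_le_one (norm_nonneg _)) hb
    have hASnorm' : opN (A - S) = 1 / ‖gi‖ := le_antisymm hASnorm (lower S hSdet)
    -- conclude
    have hopA : opN A = ‖g‖ := rfl
    have hopAi : opN A⁻¹ = ‖gi‖ := rfl
    have htarget : (1 : ℝ) / (opN A * opN A⁻¹) = (1 / ‖gi‖) / ‖g‖ := by
      rw [hopA, hopAi, div_div, mul_comm]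
    have hlb : ∀ r ∈ {r : ℝ | ∃ S' : Matrix (Fin n) (Fin n) ℝ, S'.det = 0 ∧
        r = opN (A - S') / opN A}, 1 / (opN A * opN A⁻¹) ≤ r := by
      rintro r ⟨S', hS', rfl⟩
      rw [htarget, hopA]
      gcongr
      exact lower S' hS'
    have hmem : opN (A - S) / opN A ∈ {r : ℝ | ∃ S' : Matrix (Fin n) (Fin n) ℝ, S'.det = 0 ∧
        r = opN (A - S') / opN A} := ⟨S, hSdet, rfl⟩
    have heq : opN (A - S) / opN A = 1 / (opN A * opN A⁻¹) := by
      rw [hASnorm', htarget, hopA]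
    exact le_antisymm (le_csInf ⟨_, hmem⟩ hlb)
      ((csInf_le ⟨1 / (opN A * opN A⁻¹), fun r hr => hlb r hr⟩ hmem).trans_eq heq)
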